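/- Let N = 2m+1 be an odd natural number with m ≥ 1, s_N = 1/√(N²+1), and let x be real with |x| ≤ s_N. Then B_N(x) := Σ_{n=2}^{N} |T_n(x)|·|U_{N−n}(x)| satisfies B_N(x) ≤ (m(N−m) + (3/2)·m(m+2)) · |x|. -/

import Mathlib

open Polynomial

section Helpers

lemma abs_cos_add_nat_mul_pi (t : ℝ) (j : ℕ) : |Real.cos (t + j * Real.pi)| = |Real.cos t| := by
  induction j with
  | zero => simp
  | succ j ih =>
      have : t + (j+1 : ℕ) * Real.pi = (t + j * Real.pi) + Real.pi := by push_cast; ring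
      rw [this, Real.cos_add_pi, abs_neg, ih]

lemma abs_sin_add_nat_mul_pi (t : ℝ) (j : ℕ) : |Real.sin (t + j * Real.pi)| = |Real.sin t| := by
  induction j with
  | zero => simp
  | succ j ih =>
      have : t + (j+1 : ℕ) * Real.pi = (t + j * Real.pi) + Real.pi := by push_cast; ring
      rw [this, Real.sin_add_pi, abs_neg, ih]

lemma abs_sin_nat_mul_le (j : ℕ) (t : ℝ) : |Real.sin (j * t)| ≤ j * |Real.sin t| := by
  induction j with
  | zero => simp
  | succ j ih =>
      have : ((j+1 : ℕ) : ℝ) * t = (j : ℝ) * t + t := by push_cast; ring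
      rw [this, Real.sin_add]
      calc |Real.sin (j*t) * Real.cos t + Real.cos (j*t) * Real.sin t|
          ≤ |Real.sin (j*t) * Real.cos t| + |Real.cos (j*t) * Real.sin t| := abs_add_le _ _
        _ ≤ |Real.sin (j*t)| * 1 + 1 * |Real.sin t| := by
            rw [abs_mul, abs_mul]
            have h1 := Real.abs_cos_le_one t
            have h2 := Real.abs_cos_le_one ((j:ℝ)*t)
            have := abs_nonneg (Real.sin ((j:ℝ)*t))
            have := abs_nonneg (Real.sin t)
            nlinarith
        _ ≤ j * |Real.sin t| + 1 * |Real.sin t| := by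
            rw [mul_one]; gcongr
        _ = ((j+1 : ℕ) : ℝ) * |Real.sin t| := by push_cast; ring

lemma sum_step (f : ℕ → ℝ) (m : ℕ) :
    ∑ n ∈ Finset.Icc 2 (2*m+3), f n
      = (∑ n ∈ Finset.Icc 2 (2*m+1), f n) + f (2*m+2) + f (2*m+3) := by
  rw [show 2*m+3 = (2*m+2)+1 from rfl, Finset.sum_Icc_succ_top (by omega),
      show 2*m+2 = (2*m+1)+1 from rfl, Finset.sum_Icc_succ_top (by omega)]

lemma sumg (m : ℕ) :
    ∑ n ∈ Finset.Icc 2 (2*m+1), (if Odd n then (3/2:ℝ)*n else -(n:ℝ))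
      = 3/2*m*(m+2) - m*(m+1) := by
  induction m with
  | zero => rw [Finset.Icc_eq_empty (by omega)]; simp
  | succ m ih =>
      have h1 : ¬ Odd (2*m+2) := by rw [Nat.odd_iff]; omega
      have h2 : Odd (2*m+3) := by rw [Nat.odd_iff]; omega
      rw [show 2*(m+1)+1 = 2*m+3 from rfl, sum_step, ih, if_neg h1, if_pos h2]
      push_cast; ring

lemma sumh (m : ℕ) :
    ∑ n ∈ Finset.Icc 2 (2*m+1), (if Odd n then (0:ℝ) else 1) = m := by
  induction m with
  | zero => rw [Finset.Icc_eq_empty (by omega)]; simp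
  | succ m ih =>
      have h1 : ¬ Odd (2*m+2) := by rw [Nat.odd_iff]; omega
      have h2 : Odd (2*m+3) := by rw [Nat.odd_iff]; omega
      rw [show 2*(m+1)+1 = 2*m+3 from rfl, sum_step, ih, if_neg h1, if_pos h2]
      push_cast; ring

end Helpers

set_option maxHeartbeats 1000000

/-- For odd `N = 2m+1` with `m ≥ 1` and `|x| ≤ s_N = 1/√(N²+1)`, one has
`B_N(x) = Σ_{n=2}^{N} |T_n(x)|·|U_{N−n}(x)| ≤ (m(N−m) + (3/2)·m(m+2))·|x|`. -/
theorem chebyshev_BN_bound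
    (m : ℕ) (hm : 1 ≤ m) (N : ℕ) (hN : N = 2 * m + 1) (x : ℝ)
    (hx : |x| ≤ 1 / Real.sqrt ((N : ℝ) ^ 2 + 1)) :
    ∑ n ∈ Finset.Icc 2 N,
        |(Chebyshev.T ℝ n).eval x| * |(Chebyshev.U ℝ ((N : ℤ) - n)).eval x|
      ≤ ((m : ℝ) * ((N : ℝ) - m) + 3 / 2 * m * (m + 2)) * |x| := by
  subst hN
  set N : ℕ := 2 * m + 1 with hNdef
  have hN3 : 3 ≤ N := by omega
  have hNr : (3:ℝ) ≤ (N:ℝ) := by exact_mod_cast hN3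
  have hpos : (0:ℝ) < (N:ℝ)^2 + 1 := by positivity
  have hsqrt_pos : (0:ℝ) < Real.sqrt ((N:ℝ)^2+1) := Real.sqrt_pos.mpr hpos
  -- basic bounds on x
  have hx2 : x^2 ≤ 1/((N:ℝ)^2+1) := by
    have h := pow_le_pow_left₀ (abs_nonneg x) hx 2
    rwa [sq_abs, div_pow, one_pow, Real.sq_sqrt hpos.le] at h
  have hx2' : x^2 * ((N:ℝ)^2+1) ≤ 1 := by
    have := (le_div_iff₀ hpos).mp hx2
    linarith
  have hx1 : |x| ≤ 1 := by
    refine hx.trans ?_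
    rw [div_le_one hsqrt_pos]
    calc (1:ℝ) = Real.sqrt 1 := Real.sqrt_one.symm
      _ ≤ Real.sqrt ((N:ℝ)^2+1) := Real.sqrt_le_sqrt (by nlinarith)
  -- trig setup
  set ψ := Real.arcsin x with hψdef
  have hsin : Real.sin ψ = x := Real.sin_arcsin (neg_le_of_abs_le hx1) (le_of_abs_le hx1)
  have hcos0 : 0 ≤ Real.cos ψ := Real.cos_arcsin_nonneg x
  have hcossq : Real.cos ψ ^ 2 = 1 - x ^ 2 := by
    rw [Real.cos_arcsin]
    exact Real.sq_sqrt (by nlinarith)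
  have h10 : x^2 ≤ 1/10 := by
    nlinarith [mul_nonneg (sq_nonneg x) (show (0:ℝ) ≤ (N:ℝ)^2-9 by nlinarith)]
  have hc23 : (2:ℝ)/3 ≤ Real.cos ψ := by nlinarith [hcossq, hcos0, h10]
  have hclb : (N:ℝ) * |x| ≤ Real.cos ψ := by
    nlinarith [sq_abs x, abs_nonneg x, mul_nonneg (by positivity : (0:ℝ) ≤ (N:ℝ)) (abs_nonneg x)]
  set a := |ψ| with hadef
  have ha0 : 0 ≤ a := abs_nonneg ψ
  have hca : Real.cos a = Real.cos ψ := Real.cos_abs ψ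
  have hπ := Real.pi_gt_three
  have hsa : Real.sin a = |x| := by
    rcases abs_cases ψ with ⟨he, hge⟩ | ⟨he, hlt⟩
    · rw [hadef, he, hsin]
      have hx0 : 0 ≤ x := by
        rw [← hsin]
        exact Real.sin_nonneg_of_nonneg_of_le_pi hge
          ((Real.arcsin_le_pi_div_two x).trans (by linarith))
      exact (abs_of_nonneg hx0).symm
    · rw [hadef, he, Real.sin_neg, hsin]
      have hx0 : x ≤ 0 := by
        rw [← hsin]
        exact Real.sin_nonpos_of_nonpos_of_neg_pi_le hlt.le
          (le_trans (by linarith) (Real.neg_pi_div_two_le_arcsin x))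
      exact (abs_of_nonpos hx0).symm
  have haψ : a ≤ Real.pi/2 :=
    abs_le.mpr ⟨Real.neg_pi_div_two_le_arcsin x, Real.arcsin_le_pi_div_two x⟩
  have halt : a < Real.pi/2 := by
    rcases lt_or_eq_of_le haψ with h | h
    · exact h
    · exfalso
      have : Real.cos a = 0 := by rw [h, Real.cos_pi_div_two]
      rw [hca] at this; linarith
  have hcpos : 0 < Real.cos a := by rw [hca]; linarith
  have htan : a ≤ Real.tan a := Real.le_tan ha0 halt
  have hNa : (N:ℝ) * a ≤ 1 := by
    have h1 : a * Real.cos a ≤ Real.sin a := by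
      have h := mul_le_mul_of_nonneg_right htan hcpos.le
      rwa [Real.tan_eq_sin_div_cos, div_mul_cancel₀ _ hcpos.ne'] at h
    have h2 : (N:ℝ) * Real.sin a ≤ Real.cos a := by rw [hsa, hca]; exact hclb
    nlinarith [hcpos, ha0]
  -- key estimates
  have keysin : ∀ k : ℕ, |Real.sin ((k:ℝ) * ψ)| ≤ (k:ℝ) * |x| := by
    intro k
    have h := abs_sin_nat_mul_le k ψ
    rwa [hsin] at h
  have keycos : ∀ n : ℕ, 2 ≤ n → n ≤ N → |Real.cos ((n:ℝ) * ψ)| ≤ Real.cos ψ := by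
    intro n h2 hn
    have hnN : (n:ℝ) ≤ (N:ℝ) := by exact_mod_cast hn
    have hn2 : (2:ℝ) ≤ (n:ℝ) := by exact_mod_cast h2
    have h1 : (n:ℝ) * a ≤ 1 := le_trans (mul_le_mul_of_nonneg_right hnN ha0) hNa
    have heq : Real.cos ((n:ℝ) * ψ) = Real.cos ((n:ℝ) * a) := by
      rw [← Real.cos_abs ((n:ℝ)*ψ), abs_mul, Nat.abs_cast]
    rw [heq]
    have hna0 : (0:ℝ) ≤ (n:ℝ) * a := by positivity
    have hnn : 0 ≤ Real.cos ((n:ℝ)*a) :=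
      Real.cos_nonneg_of_mem_Icc ⟨by linarith, by linarith⟩
    rw [abs_of_nonneg hnn]
    have h2a : Real.cos ((n:ℝ)*a) ≤ Real.cos (2*a) :=
      Real.cos_le_cos_of_nonneg_of_le_pi (by positivity) (by linarith)
        (mul_le_mul_of_nonneg_right hn2 ha0)
    have h3 : Real.cos (2*a) ≤ Real.cos a := by
      rw [Real.cos_two_mul]
      have hle1 : Real.cos a ≤ 1 := Real.cos_le_one a
      nlinarith [hca, hc23]
    rw [← hca]; linarith
  have hxcos : x = Real.cos (Real.pi/2 - ψ) := by rw [Real.cos_pi_div_two_sub, hsin]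
  have hsinφ : Real.sin (Real.pi/2 - ψ) = Real.cos ψ := Real.sin_pi_div_two_sub ψ
  -- termwise bound and summation
  calc ∑ n ∈ Finset.Icc 2 N,
        |(Chebyshev.T ℝ n).eval x| * |(Chebyshev.U ℝ ((N : ℤ) - n)).eval x|
      ≤ ∑ n ∈ Finset.Icc 2 N,
          ((if Odd n then (3/2:ℝ)*n else -(n:ℝ))
            + (2*(m:ℝ)+2) * (if Odd n then (0:ℝ) else 1)) * |x| := by
        apply Finset.sum_le_sum
        intro n hn
        rw [Finset.mem_Icc] at hn
        obtain ⟨hn2, hnN⟩ := hn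
        set K : ℕ := N - n with hKdef
        have hKz : (N : ℤ) - (n:ℤ) = (K:ℤ) := by omega
        have hT := Polynomial.Chebyshev.T_real_cos (Real.pi/2 - ψ) (n:ℤ)
        rw [← hxcos] at hT
        push_cast at hT
        have hU := Polynomial.Chebyshev.U_real_cos (Real.pi/2 - ψ) (K:ℤ)
        rw [← hxcos, hsinφ] at hU
        push_cast at hU
        rw [hKz]
        have hUabs : |(Chebyshev.U ℝ (K:ℤ)).eval x| * Real.cos ψ
            = |Real.sin (((K:ℝ)+1) * (Real.pi/2 - ψ))| := by
          rw [← abs_of_nonneg hcos0, ← abs_mul, hU]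
        have hKcast : (K:ℝ) = 2*(m:ℝ)+1 - (n:ℝ) := by
          have : (K:ℤ) = 2*(m:ℤ)+1 - (n:ℤ) := by omega
          exact_mod_cast congrArg (fun z : ℤ => (z:ℝ)) this
        rcases Nat.even_or_odd n with hpar | hpar
        · -- n even
          have hnodd : ¬ Odd n := Nat.not_odd_iff_even.mpr hpar
          rw [if_neg hnodd, if_neg hnodd]
          have hmod : n % 2 = 0 := Nat.even_iff.mp hpar
          set j : ℕ := n / 2 with hjdef
          have hj : n = 2*j := by omega
          set i : ℕ := (K+1)/2 with hidef
          have hi : K + 1 = 2*i := by omega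
          have hTb : |(Chebyshev.T ℝ (n:ℤ)).eval x| ≤ Real.cos ψ := by
            rw [hT]
            have harg : (n:ℝ)*(Real.pi/2 - ψ) = (-((n:ℝ)*ψ)) + (j:ℝ) * Real.pi := by
              rw [hj]; push_cast; ring
            rw [harg, abs_cos_add_nat_mul_pi, Real.cos_neg]
            exact keycos n hn2 hnN
          have hUb : |(Chebyshev.U ℝ (K:ℤ)).eval x| * Real.cos ψ ≤ ((K:ℝ)+1) * |x| := by
            rw [hUabs]
            have harg : ((K:ℝ)+1)*(Real.pi/2 - ψ)
                = (-((((K+1:ℕ)):ℝ)*ψ)) + (i:ℝ) * Real.pi := by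
              have : ((K+1:ℕ):ℝ) = 2*(i:ℝ) := by exact_mod_cast congrArg (Nat.cast : ℕ → ℝ) hi
              push_cast at this ⊢
              rw [this]; ring
            rw [harg, abs_sin_add_nat_mul_pi, Real.sin_neg, abs_neg]
            have := keysin (K+1)
            push_cast at this ⊢
            exact this
          calc |(Chebyshev.T ℝ (n:ℤ)).eval x| * |(Chebyshev.U ℝ (K:ℤ)).eval x|
              ≤ Real.cos ψ * |(Chebyshev.U ℝ (K:ℤ)).eval x| :=
                mul_le_mul_of_nonneg_right hTb (abs_nonneg _)
            _ = |(Chebyshev.U ℝ (K:ℤ)).eval x| * Real.cos ψ := mul_comm _ _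
            _ ≤ ((K:ℝ)+1) * |x| := hUb
            _ = (-(n:ℝ) + (2*(m:ℝ)+2) * 1) * |x| := by rw [hKcast]; ring
        · -- n odd
          have hmod : n % 2 = 1 := Nat.odd_iff.mp hpar
          rw [if_pos hpar, if_pos hpar]
          set j : ℕ := n / 2 with hjdef
          have hj : n = 2*j+1 := by omega
          set i : ℕ := K/2 with hidef
          have hi : K = 2*i := by omega
          have hTb : |(Chebyshev.T ℝ (n:ℤ)).eval x| ≤ (n:ℝ) * |x| := by
            rw [hT]
            have harg : (n:ℝ)*(Real.pi/2 - ψ)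
                = (Real.pi/2 - (n:ℝ)*ψ) + (j:ℝ) * Real.pi := by
              rw [hj]; push_cast; ring
            rw [harg, abs_cos_add_nat_mul_pi, Real.cos_pi_div_two_sub]
            exact keysin n
          have hUb : |(Chebyshev.U ℝ (K:ℤ)).eval x| * Real.cos ψ ≤ 1 := by
            rw [hUabs]
            have harg : ((K:ℝ)+1)*(Real.pi/2 - ψ)
                = (Real.pi/2 - ((K:ℝ)+1)*ψ) + (i:ℝ) * Real.pi := by
              have : (K:ℝ) = 2*(i:ℝ) := by exact_mod_cast congrArg (Nat.cast : ℕ → ℝ) hi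
              rw [this]; ring
            rw [harg, abs_sin_add_nat_mul_pi, Real.sin_pi_div_two_sub]
            exact Real.abs_cos_le_one _
          have hU32 : |(Chebyshev.U ℝ (K:ℤ)).eval x| ≤ 3/2 := by
            have hcψpos : 0 < Real.cos ψ := by linarith
            rw [← mul_le_mul_iff_of_pos_right hcψpos]
            calc |(Chebyshev.U ℝ (K:ℤ)).eval x| * Real.cos ψ ≤ 1 := hUb
              _ ≤ 3/2 * Real.cos ψ := by linarith
          calc |(Chebyshev.T ℝ (n:ℤ)).eval x| * |(Chebyshev.U ℝ (K:ℤ)).eval x|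
              ≤ ((n:ℝ) * |x|) * (3/2) := by
                apply mul_le_mul hTb hU32 (abs_nonneg _) (by positivity)
            _ = ((3/2:ℝ)*(n:ℝ) + (2*(m:ℝ)+2) * 0) * |x| := by ring
      _ = ((m : ℝ) * ((N : ℝ) - m) + 3 / 2 * m * (m + 2)) * |x| := by
        rw [← Finset.sum_mul, Finset.sum_add_distrib, ← Finset.mul_sum]
        rw [hNdef, sumg, sumh]
        push_cast
        ring
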